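/- Let σ ⊆ ℝ^n be a rational polyhedral cone that spans ℝ^n, and let S = σ^∨ ∩ ℤ^n. Let H be the set of irreducible elements of S, i.e., nonzero s ∈ S that cannot be written as s = s₁ + s₂ with s₁, s₂ ∈ S both nonzero. Then H is finite, H generates S as an additive monoid, and H is contained in every generating set of S; hence H is the unique minimal finite generating set of S (the Hilbert basis of S). -/

import Mathlib

open Finset

/-- The canonical map `ℤ^n → ℝ^n`. -/
def coeR {n : ℕ} (x : Fin n → ℤ) : Fin n → ℝ := fun i => (x i : ℝ)

/-- The standard inner product on `ℝ^n`. -/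
def innerR {n : ℕ} (m x : Fin n → ℝ) : ℝ := ∑ i, m i * x i

/-- The rational polyhedral cone generated by the integer vectors `a i`. -/
def ratCone {n r : ℕ} (a : Fin r → Fin n → ℤ) : Set (Fin n → ℝ) :=
  {x | ∃ lam : Fin r → ℝ, (∀ i, 0 ≤ lam i) ∧ x = ∑ i, lam i • coeR (a i)}

/-- The dual cone of a subset of `ℝ^n`. -/
def dualCone {n : ℕ} (σ : Set (Fin n → ℝ)) : Set (Fin n → ℝ) :=
  {m | ∀ u ∈ σ, 0 ≤ innerR m u}

/-- The monoid `S = σ^∨ ∩ ℤ^n` of lattice points of the dual cone of the rational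
polyhedral cone `σ = Cone(a₁,…,a_r)`, as an additive submonoid of `ℤ^n`. -/
def dualLatticeMonoid {n r : ℕ} (a : Fin r → Fin n → ℤ) : AddSubmonoid (Fin n → ℤ) where
  carrier := {x | coeR x ∈ dualCone (ratCone a)}
  zero_mem' := by
    intro u _
    simp [innerR, coeR]
  add_mem' := by
    intro x y hx hy u hu
    have h1 := hx u hu
    have h2 := hy u hu
    simp only [innerR, coeR, Pi.add_apply, Int.cast_add, add_mul,
      Finset.sum_add_distrib] at h1 h2 ⊢
    linarith

-- dot products
def dotA {n r : ℕ} (a : Fin r → Fin n → ℤ) (m : Fin n → ℤ) : Fin r → ℤ :=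
  fun i => ∑ j, m j * a i j

lemma dotA_add {n r : ℕ} (a : Fin r → Fin n → ℤ) (m m' : Fin n → ℤ) :
    dotA a (m + m') = dotA a m + dotA a m' := by
  funext i
  simp [dotA, add_mul, Finset.sum_add_distrib]

lemma aR_mem_ratCone {n r : ℕ} (a : Fin r → Fin n → ℤ) (i : Fin r) :
    coeR (a i) ∈ ratCone a := by
  refine ⟨fun k => if k = i then 1 else 0, fun k => by positivity, ?_⟩
  simp [ite_smul]

lemma innerR_coeR_aR {n r : ℕ} (a : Fin r → Fin n → ℤ) (m : Fin n → ℤ) (i : Fin r) :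
    innerR (coeR m) (coeR (a i)) = (dotA a m i : ℝ) := by
  simp [innerR, coeR, dotA]

lemma mem_dualLatticeMonoid_iff {n r : ℕ} (a : Fin r → Fin n → ℤ) (m : Fin n → ℤ) :
    m ∈ dualLatticeMonoid a ↔ ∀ i, 0 ≤ dotA a m i := by
  constructor
  · intro hm i
    have := hm (coeR (a i)) (aR_mem_ratCone a i)
    rw [innerR_coeR_aR] at this
    exact_mod_cast this
  · rintro h u ⟨lam, hlam, rfl⟩
    have : innerR (coeR m) (∑ i, lam i • coeR (a i)) = ∑ i, lam i * (dotA a m i : ℝ) := by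
      simp only [innerR, coeR, Finset.sum_apply, Pi.smul_apply, smul_eq_mul, dotA,
        Finset.mul_sum]
      rw [Finset.sum_comm]
      push_cast
      apply Finset.sum_congr rfl
      intro i _
      rw [Finset.mul_sum]
      apply Finset.sum_congr rfl
      intro j _
      ring
    rw [this]
    apply Finset.sum_nonneg
    intro i _
    have hd : (0:ℝ) ≤ (dotA a m i : ℝ) := by exact_mod_cast h i
    exact mul_nonneg (hlam i) hd

lemma eq_zero_of_dotA {n r : ℕ} (a : Fin r → Fin n → ℤ)
    (hspan : Submodule.span ℝ (ratCone a) = ⊤) (m : Fin n → ℤ)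
    (h : ∀ i, dotA a m i = 0) : m = 0 := by
  set f : (Fin n → ℝ) →ₗ[ℝ] ℝ :=
    { toFun := fun x => innerR (coeR m) x
      map_add' := by
        intro x y
        simp [innerR, mul_add, Finset.sum_add_distrib]
      map_smul' := by
        intro c x
        simp [innerR, Finset.mul_sum]
        apply Finset.sum_congr rfl
        intro j _
        ring } with hf
  have hker : ratCone a ⊆ (LinearMap.ker f : Set (Fin n → ℝ)) := by
    rintro x ⟨lam, hlam, rfl⟩
    simp only [SetLike.mem_coe, LinearMap.mem_ker, map_sum, map_smul]
    have : ∀ i : Fin r, f (coeR (a i)) = 0 := by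
      intro i
      show innerR (coeR m) (coeR (a i)) = 0
      rw [innerR_coeR_aR, h i]
      simp
    simp [this]
  have hker2 : Submodule.span ℝ (ratCone a) ≤ LinearMap.ker f :=
    Submodule.span_le.mpr hker
  rw [hspan, top_le_iff] at hker2
  have hm : f (coeR m) = 0 := by
    rw [← LinearMap.mem_ker, hker2]; trivial
  have : ∑ j, ((m j : ℝ)) * (m j : ℝ) = 0 := hm
  have hz : ∀ j ∈ Finset.univ, ((m j : ℝ)) * (m j : ℝ) = 0 :=
    (Finset.sum_eq_zero_iff_of_nonneg (fun j _ => mul_self_nonneg _)).mp this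
  funext j
  have := hz j (Finset.mem_univ j)
  have : (m j : ℝ) = 0 := by
    exact mul_self_eq_zero.mp this
  exact_mod_cast this

lemma sum_dotA_pos {n r : ℕ} (a : Fin r → Fin n → ℤ)
    (hspan : Submodule.span ℝ (ratCone a) = ⊤) (m : Fin n → ℤ)
    (hm : m ∈ dualLatticeMonoid a) (hm0 : m ≠ 0) : 0 < ∑ i, dotA a m i := by
  have hnn := Finset.sum_nonneg (fun i (_ : i ∈ Finset.univ) =>
    (mem_dualLatticeMonoid_iff a m).mp hm i)
  rcases lt_or_eq_of_le hnn with h' | h'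
  · exact h'
  · exfalso
    apply hm0
    apply eq_zero_of_dotA a hspan m
    intro i
    exact (Finset.sum_eq_zero_iff_of_nonneg (fun i _ =>
      (mem_dualLatticeMonoid_iff a m).mp hm i)).mp h'.symm i (Finset.mem_univ i)

/-- The set of irreducible elements of `S = σ^∨ ∩ ℤ^n`: nonzero elements that are not the
sum of two nonzero elements of `S`. -/
def hilbertSet {n r : ℕ} (a : Fin r → Fin n → ℤ) : Set (Fin n → ℤ) :=
  {s | s ∈ dualLatticeMonoid a ∧ s ≠ 0 ∧
    ¬∃ s₁ s₂ : Fin n → ℤ, s₁ ∈ dualLatticeMonoid a ∧ s₂ ∈ dualLatticeMonoid a ∧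
      s₁ ≠ 0 ∧ s₂ ≠ 0 ∧ s = s₁ + s₂}

/-- Every element of `S` lies in the closure of the Hilbert set (induction on total degree). -/
lemma mem_closure_hilbertSet {n r : ℕ} (a : Fin r → Fin n → ℤ)
    (hspan : Submodule.span ℝ (ratCone a) = ⊤) :
    ∀ N : ℕ, ∀ m : Fin n → ℤ, m ∈ dualLatticeMonoid a → (∑ i, dotA a m i) ≤ (N : ℤ) →
      m ∈ AddSubmonoid.closure (hilbertSet a) := by
  intro N
  induction N with
  | zero =>
    intro m hm hN
    have : m = 0 := by
      by_contra h0
      have := sum_dotA_pos a hspan m hm h0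
      omega
    rw [this]
    exact zero_mem _
  | succ N ih =>
    intro m hm hN
    by_cases h0 : m = 0
    · rw [h0]; exact zero_mem _
    by_cases hH : m ∈ hilbertSet a
    · exact AddSubmonoid.subset_closure hH
    · have hred : ∃ s₁ s₂ : Fin n → ℤ, s₁ ∈ dualLatticeMonoid a ∧ s₂ ∈ dualLatticeMonoid a ∧
          s₁ ≠ 0 ∧ s₂ ≠ 0 ∧ m = s₁ + s₂ := by
        by_contra h
        exact hH ⟨hm, h0, h⟩
      obtain ⟨s₁, s₂, hs₁, hs₂, h1, h2, rfl⟩ := hred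
      have hsum : ∑ i, dotA a (s₁ + s₂) i = (∑ i, dotA a s₁ i) + ∑ i, dotA a s₂ i := by
        rw [dotA_add]
        simp [Finset.sum_add_distrib]
      have p1 := sum_dotA_pos a hspan s₁ hs₁ h1
      have p2 := sum_dotA_pos a hspan s₂ hs₂ h2
      exact add_mem (ih s₁ hs₁ (by omega)) (ih s₂ hs₂ (by omega))

/-- **Hilbert basis.** Let `σ ⊆ ℝ^n` be a rational polyhedral cone spanning `ℝ^n` and
`S = σ^∨ ∩ ℤ^n`. The set `H` of irreducible elements of `S` is finite, generates `S`,
and is contained in every generating set of `S`; hence `H` is the unique minimal finite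
generating set (the Hilbert basis) of `S`. -/
theorem hilbert_basis {n r : ℕ} (a : Fin r → Fin n → ℤ)
    (hspan : Submodule.span ℝ (ratCone a) = ⊤) :
    (hilbertSet a).Finite ∧
      AddSubmonoid.closure (hilbertSet a) = dualLatticeMonoid a ∧
      ∀ T : Set (Fin n → ℤ), T ⊆ (dualLatticeMonoid a : Set (Fin n → ℤ)) →
        AddSubmonoid.closure T = dualLatticeMonoid a → hilbertSet a ⊆ T := by
  refine ⟨?_, ?_, ?_⟩
  · -- finiteness via Dickson's lemma
    set χ : (Fin n → ℤ) → (Fin r → ℕ) := fun m i => (dotA a m i).toNat with hχ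
    have hinj : Set.InjOn χ (hilbertSet a) := by
      intro x hx y hy hxy
      have hx' := (mem_dualLatticeMonoid_iff a x).mp hx.1
      have hy' := (mem_dualLatticeMonoid_iff a y).mp hy.1
      have hd : dotA a x = dotA a y := by
        funext i
        have h1 := congrFun hxy i
        have h2 := hx' i
        have h3 := hy' i
        simp only [hχ] at h1
        omega
      have : dotA a (x + (-y)) = 0 := by
        funext i
        have hneg : dotA a (x + -y) i = dotA a x i - dotA a y i := by
          simp [dotA, add_mul, sub_mul, Finset.sum_add_distrib, sub_eq_add_neg]
        rw [Pi.zero_apply, hneg, hd]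
        ring
      have := eq_zero_of_dotA a hspan _ (fun i => congrFun this i)
      have : x = y := by
        funext j
        have := congrFun this j
        simp at this
        omega
      exact this
    have hanti : IsAntichain (· ≤ ·) (χ '' hilbertSet a) := by
      rintro _ ⟨x, hx, rfl⟩ _ ⟨y, hy, rfl⟩ hne hle
      apply hne
      -- if χ x ≤ χ y with x ≠ y, then y = x + (y - x) is a nontrivial decomposition
      have hx' := (mem_dualLatticeMonoid_iff a x).mp hx.1
      have hy' := (mem_dualLatticeMonoid_iff a y).mp hy.1
      by_cases hxy : x = y
      · rw [hxy]
      exfalso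
      have hdle : ∀ i, dotA a x i ≤ dotA a y i := by
        intro i
        have h1 := hle i
        have h2 := hx' i
        have h3 := hy' i
        simp only [hχ] at h1
        omega
      have hs : (y - x) ∈ dualLatticeMonoid a := by
        rw [mem_dualLatticeMonoid_iff]
        intro i
        have : dotA a (y - x) i = dotA a y i - dotA a x i := by
          simp [dotA, sub_mul, Finset.sum_sub_distrib]
        rw [this]
        have := hdle i
        omega
      have hs0 : y - x ≠ 0 := fun h => hxy (by
        have : y = x := by
          funext j
          have := congrFun h j
          simp at this
          omega
        exact this.symm)
      exact hy.2.2 ⟨x, y - x, hx.1, hs, hx.2.1, hs0, by ring⟩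
    have hpwo : (χ '' hilbertSet a).IsPWO :=
      Set.isPWO_of_wellQuasiOrderedLE _
    have hfin : (χ '' hilbertSet a).Finite :=
      hanti.finite_of_partiallyWellOrderedOn hpwo
    exact Set.Finite.of_finite_image hfin hinj
  · -- closure H = S
    apply le_antisymm
    · rw [AddSubmonoid.closure_le]
      intro x hx
      exact hx.1
    · intro m hm
      exact mem_closure_hilbertSet a hspan (∑ i, dotA a m i).toNat m hm (by
        have := Finset.sum_nonneg (fun i (_ : i ∈ Finset.univ) =>
          (mem_dualLatticeMonoid_iff a m).mp hm i)
        omega)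
  · -- minimality
    intro T hT hcl h hh
    have hhcl : h ∈ AddSubmonoid.closure T := by rw [hcl]; exact hh.1
    obtain ⟨l, hl, hsum⟩ := AddSubmonoid.exists_multiset_of_mem_closure hhcl
    -- filter out zeros
    set l' := l.filter (fun x => x ≠ 0) with hl'
    have hsum' : l'.sum = h := by
      rw [← hsum, hl']
      conv_rhs => rw [← Multiset.filter_add_not (fun x => x ≠ 0) l]
      rw [Multiset.sum_add]
      have : (l.filter (fun x => ¬ x ≠ 0)).sum = 0 := by
        apply Multiset.sum_eq_zero
        intro x hx
        have := Multiset.of_mem_filter hx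
        simpa using this
      rw [this, add_zero]
    have hl'mem : ∀ y ∈ l', y ∈ T := fun y hy => hl y (Multiset.mem_of_mem_filter hy)
    have hl'ne : ∀ y ∈ l', y ≠ 0 := fun y hy => by simpa using (Multiset.mem_filter.mp hy).2
    rcases Multiset.empty_or_exists_mem l' with he | ⟨t, ht⟩
    · exfalso
      apply hh.2.1
      rw [← hsum', he]
      simp
    · obtain ⟨rest, hrest⟩ := Multiset.exists_cons_of_mem ht
      have hsplit : h = t + rest.sum := by
        rw [← hsum', hrest, Multiset.sum_cons]
      have htT : t ∈ T := hl'mem t ht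
      have hrestS : rest.sum ∈ dualLatticeMonoid a := by
        apply AddSubmonoid.multiset_sum_mem
        intro y hy
        exact hT (hl'mem y (by rw [hrest]; exact Multiset.mem_cons_of_mem hy))
      by_cases hr0 : rest.sum = 0
      · rw [hsplit, hr0, add_zero]
        exact htT
      · exfalso
        exact hh.2.2 ⟨t, rest.sum, hT htT, hrestS, hl'ne t ht, hr0, hsplit⟩
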